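/- Let g : ℝ → ℝ be a (strictly increasing, continuous, surjective) increasing homeomorphism, let G be its Beurling–Ahlfors extension, and suppose that the map Ḡ : ℝ×[0,∞) → ℝ×[0,∞) defined by Ḡ = G on ℝ×(0,∞) and Ḡ(x,0) = (g(x), 0) is a homeomorphism of the closed upper half-plane onto itself. Let x ∈ ℝ and 0 < r < R, and set R′ = (1/2)·min_{k=1,…,8} ( g(x − R + kR/4) − g(x − R + (k−1)R/4) ) and r′ = g(x+2r) − g(x−2r). Then Ḡ( D[x,R] \ D[x,r] ) ⊇ D[g(x), R′] \ D[g(x), r′]. -/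

import Mathlib

set_option maxHeartbeats 1000000

open MeasureTheory

/-- The Beurling–Ahlfors extension of `ψ : ℝ → ℝ`, as a map on the (open) upper half-plane. -/
noncomputable def BA (ψ : ℝ → ℝ) (p : ℝ × ℝ) : ℝ × ℝ :=
  ((1 / 2) * ∫ t in (0 : ℝ)..1, (ψ (p.1 + t * p.2) + ψ (p.1 - t * p.2)),
    ∫ t in (0 : ℝ)..1, (ψ (p.1 + t * p.2) - ψ (p.1 - t * p.2)))

/-- The Beurling–Ahlfors extension, extended to the closed upper half-plane by the
boundary values `(g x, 0)`. -/
noncomputable def BAbar (g : ℝ → ℝ) (p : ℝ × ℝ) : ℝ × ℝ :=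
  if 0 < p.2 then BA g p else (g p.1, 0)

/-- The box `D[x,r] = [x-r, x+r] × [0, r]`. -/
def Dbox (x r : ℝ) : Set (ℝ × ℝ) := Set.Icc (x - r) (x + r) ×ˢ Set.Icc 0 r

/-- A preconnected set meeting both `t` and its complement meets the frontier of `t`. -/
lemma BAaux_preconn_frontier {X : Type*} [TopologicalSpace X] {s t : Set X}
    (hs : IsPreconnected s) (h1 : (s ∩ t).Nonempty) (h2 : (s \ t).Nonempty) :
    (s ∩ frontier t).Nonempty := by
  by_contra hd
  rw [Set.not_nonempty_iff_eq_empty] at hd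
  have hsub : s ⊆ interior t ∪ (closure t)ᶜ := by
    intro z hz
    have hzf : z ∉ frontier t := fun hf => by
      have : z ∈ s ∩ frontier t := ⟨hz, hf⟩
      simp [hd] at this
    by_cases hzc : z ∈ closure t
    · left
      rcases (Set.mem_union _ _ _).mp (by
        rw [← closure_eq_self_union_frontier] at *
        exact hzc : z ∈ t ∪ frontier t) with h | h
      · by_contra hint
        exact hzf ⟨hzc, hint⟩
      · exact absurd h hzf
    · exact Or.inr hzc
  have h1' : (s ∩ interior t).Nonempty := by
    obtain ⟨z, hzs, hzt⟩ := h1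
    refine ⟨z, hzs, ?_⟩
    rcases hsub hzs with h | h
    · exact h
    · exact absurd (subset_closure hzt) h
  have h2' : (s ∩ (closure t)ᶜ).Nonempty := by
    obtain ⟨z, hzs, hzt⟩ := h2
    refine ⟨z, hzs, ?_⟩
    rcases hsub hzs with h | h
    · exact absurd (interior_subset h) hzt
    · exact h
  obtain ⟨z, _, hzi, hzc⟩ := hs _ _ isOpen_interior (isClosed_closure.isOpen_compl)
    hsub h1' h2'
  exact hzc (subset_closure (interior_subset hzi))

lemma BAaux_integral_ge_split (f : ℝ → ℝ) (hf : Continuous f) (m c d : ℝ)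
    (hm0 : 0 ≤ m) (hm1 : m ≤ 1)
    (h1 : ∀ t ∈ Set.Icc (0:ℝ) m, c ≤ f t)
    (h2 : ∀ t ∈ Set.Icc m 1, d ≤ f t) :
    m * c + (1 - m) * d ≤ ∫ t in (0:ℝ)..1, f t := by
  have hi : ∀ a b : ℝ, IntervalIntegrable f volume a b := fun a b => hf.intervalIntegrable a b
  have e : (∫ t in (0:ℝ)..1, f t) = (∫ t in (0:ℝ)..m, f t) + ∫ t in m..1, f t :=
    (intervalIntegral.integral_add_adjacent_intervals (hi 0 m) (hi m 1)).symm
  rw [e]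
  have b1 : m * c ≤ ∫ t in (0:ℝ)..m, f t := by
    have := intervalIntegral.integral_mono_on (f := fun _ => c) (g := f) hm0
      intervalIntegrable_const (hi 0 m) h1
    simpa [mul_comm] using this
  have b2 : (1 - m) * d ≤ ∫ t in m..1, f t := by
    have := intervalIntegral.integral_mono_on (f := fun _ => d) (g := f) hm1
      intervalIntegrable_const (hi m 1) h2
    simpa [mul_comm] using this
  linarith

lemma BAaux_integral_le_split (f : ℝ → ℝ) (hf : Continuous f) (m c d : ℝ)
    (hm0 : 0 ≤ m) (hm1 : m ≤ 1)
    (h1 : ∀ t ∈ Set.Icc (0:ℝ) m, f t ≤ c)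
    (h2 : ∀ t ∈ Set.Icc m 1, f t ≤ d) :
    (∫ t in (0:ℝ)..1, f t) ≤ m * c + (1 - m) * d := by
  have := BAaux_integral_ge_split (fun t => -f t) (hf.neg) m (-c) (-d) hm0 hm1
    (fun t ht => neg_le_neg (h1 t ht)) (fun t ht => neg_le_neg (h2 t ht))
  rw [intervalIntegral.integral_neg] at this
  linarith

lemma BAaux_integral_ge_const (f : ℝ → ℝ) (hf : Continuous f) (c : ℝ)
    (h1 : ∀ t ∈ Set.Icc (0:ℝ) 1, c ≤ f t) :
    c ≤ ∫ t in (0:ℝ)..1, f t := by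
  have := BAaux_integral_ge_split f hf 1 c c zero_le_one le_rfl h1
    (fun t ht => h1 t ⟨le_trans zero_le_one ht.1, ht.2⟩)
  linarith

lemma BAaux_integral_le_const (f : ℝ → ℝ) (hf : Continuous f) (c : ℝ)
    (h1 : ∀ t ∈ Set.Icc (0:ℝ) 1, f t ≤ c) :
    (∫ t in (0:ℝ)..1, f t) ≤ c := by
  have := BAaux_integral_le_split f hf 1 c c zero_le_one le_rfl h1
    (fun t ht => h1 t ⟨le_trans zero_le_one ht.1, ht.2⟩)
  linarith

theorem stmt9 (g : ℝ → ℝ) (hmono : StrictMono g) (hcont : Continuous g)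
    (hsurj : Function.Surjective g)
    (hhomeo : ∃ h : {p : ℝ × ℝ // 0 ≤ p.2} ≃ₜ {p : ℝ × ℝ // 0 ≤ p.2},
      ∀ p : {p : ℝ × ℝ // 0 ≤ p.2}, (h p : ℝ × ℝ) = BAbar g p)
    (x r R : ℝ) (hr : 0 < r) (hrR : r < R) (R' r' : ℝ)
    (hR' : R' = (1 / 2) * (Finset.Icc 1 8).inf' (Finset.nonempty_Icc.mpr (by norm_num))
      (fun k : ℕ => g (x - R + (k : ℝ) * R / 4) - g (x - R + ((k : ℝ) - 1) * R / 4)))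
    (hr' : r' = g (x + 2 * r) - g (x - 2 * r)) :
    Dbox (g x) R' \ Dbox (g x) r' ⊆ BAbar g '' (Dbox x R \ Dbox x r) := by
  obtain ⟨h, hh⟩ := hhomeo
  have hR : 0 < R := hr.trans hrR
  have hgmono := hmono.monotone
  -- the key increment bound
  have key : ∀ k : ℕ, k ∈ Finset.Icc 1 8 →
      2 * R' ≤ g (x - R + (k : ℝ) * R / 4) - g (x - R + ((k : ℝ) - 1) * R / 4) := by
    intro k hk
    have := Finset.inf'_le
      (fun k : ℕ => g (x - R + (k : ℝ) * R / 4) - g (x - R + ((k : ℝ) - 1) * R / 4)) hk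
    rw [hR']
    linarith
  have hR'pos : 0 < R' := by
    rw [hR']
    have : (0:ℝ) < (Finset.Icc 1 8).inf' (Finset.nonempty_Icc.mpr (by norm_num))
        (fun k : ℕ => g (x - R + (k : ℝ) * R / 4) - g (x - R + ((k : ℝ) - 1) * R / 4)) := by
      rw [Finset.lt_inf'_iff]
      intro k hk
      have harg : x - R + ((k : ℝ) - 1) * R / 4 < x - R + (k : ℝ) * R / 4 := by
        have e : x - R + (k : ℝ) * R / 4 - (x - R + ((k : ℝ) - 1) * R / 4) = R / 4 := by ring
        linarith
      exact sub_pos.mpr (hmono harg)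
    linarith
  have hr'nonneg : 0 ≤ r' := by
    rw [hr']
    have := hgmono (show x - 2*r ≤ x + 2*r by linarith)
    linarith
  have keyR : ∀ (k : ℕ), k ∈ Finset.Icc 1 8 → ∀ a b : ℝ,
      a = x - R + ((k : ℝ) - 1) * R / 4 → b = x - R + (k : ℝ) * R / 4 → 2 * R' ≤ g b - g a := by
    intro k hk a b ha hb
    rw [ha, hb]
    exact key k hk
  have K1 : 2 * R' ≤ g (x - 3*R/4) - g (x - R) :=
    keyR 1 (by norm_num) _ _ (by push_cast; ring) (by push_cast; ring)
  have K2 : 2 * R' ≤ g (x - R/2) - g (x - 3*R/4) :=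
    keyR 2 (by norm_num) _ _ (by push_cast; ring) (by push_cast; ring)
  have K3 : 2 * R' ≤ g (x - R/4) - g (x - R/2) :=
    keyR 3 (by norm_num) _ _ (by push_cast; ring) (by push_cast; ring)
  have K4 : 2 * R' ≤ g x - g (x - R/4) :=
    keyR 4 (by norm_num) _ _ (by push_cast; ring) (by push_cast; ring)
  have K5 : 2 * R' ≤ g (x + R/4) - g x :=
    keyR 5 (by norm_num) _ _ (by push_cast; ring) (by push_cast; ring)
  have K6 : 2 * R' ≤ g (x + R/2) - g (x + R/4) :=
    keyR 6 (by norm_num) _ _ (by push_cast; ring) (by push_cast; ring)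
  have K7 : 2 * R' ≤ g (x + 3*R/4) - g (x + R/2) :=
    keyR 7 (by norm_num) _ _ (by push_cast; ring) (by push_cast; ring)
  have K8 : 2 * R' ≤ g (x + R) - g (x + 3*R/4) :=
    keyR 8 (by norm_num) _ _ (by push_cast; ring) (by push_cast; ring)
  -- (b): image of the small box is inside the small target box
  have hsmall : ∀ p ∈ Dbox x r, BAbar g p ∈ Dbox (g x) r' := by
    intro p hp
    obtain ⟨hp1, hp2⟩ := hp
    simp only [Set.mem_Icc] at hp1 hp2
    have hlow : g x - r' ≤ g (x - 2*r) := by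
      rw [hr']; have := hgmono (show x ≤ x + 2*r by linarith); linarith
    have hhigh : g (x + 2*r) ≤ g x + r' := by
      rw [hr']; have := hgmono (show x - 2*r ≤ x by linarith); linarith
    by_cases hy : 0 < p.2
    · have hcont1 : Continuous fun t : ℝ => g (p.1 + t * p.2) + g (p.1 - t * p.2) :=
        ((hcont.comp (continuous_const.add (continuous_id.mul continuous_const))).add (hcont.comp (continuous_const.sub (continuous_id.mul continuous_const))))
      have hcont2 : Continuous fun t : ℝ => g (p.1 + t * p.2) - g (p.1 - t * p.2) :=
        ((hcont.comp (continuous_const.add (continuous_id.mul continuous_const))).sub (hcont.comp (continuous_const.sub (continuous_id.mul continuous_const))))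
      have hrange : ∀ t ∈ Set.Icc (0:ℝ) 1, x - 2*r ≤ p.1 - t * p.2 ∧ p.1 + t * p.2 ≤ x + 2*r := by
        intro t ht
        obtain ⟨ht0, ht1⟩ := ht
        have h1 : 0 ≤ t * p.2 := mul_nonneg ht0 hy.le
        have h2 : t * p.2 ≤ r := by
          calc t * p.2 ≤ 1 * p.2 := by nlinarith
          _ ≤ r := by linarith [hp2.2]
        constructor <;> nlinarith
      rw [BAbar, if_pos hy]
      refine ⟨Set.mem_Icc.mpr ⟨?_, ?_⟩, Set.mem_Icc.mpr ⟨?_, ?_⟩⟩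
      · have := BAaux_integral_ge_const _ hcont1 (2 * g (x - 2*r)) (fun t ht => by
          obtain ⟨hA, hB⟩ := hrange t ht
          have := hgmono hA
          have : g (x - 2*r) ≤ g (p.1 + t * p.2) := hgmono (by
            have := mul_nonneg ht.1 hy.le; linarith)
          linarith [hgmono (hrange t ht).1])
        show g x - r' ≤ 1/2 * ∫ t in (0:ℝ)..1, (g (p.1 + t * p.2) + g (p.1 - t * p.2))
        linarith
      · have := BAaux_integral_le_const _ hcont1 (2 * g (x + 2*r)) (fun t ht => by
          obtain ⟨hA, hB⟩ := hrange t ht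
          have h1 := hgmono hB
          have h2 : g (p.1 - t * p.2) ≤ g (x + 2*r) := hgmono (by
            have := mul_nonneg ht.1 hy.le; linarith)
          linarith)
        show (1/2 * ∫ t in (0:ℝ)..1, (g (p.1 + t * p.2) + g (p.1 - t * p.2))) ≤ g x + r'
        linarith
      · exact BAaux_integral_ge_const _ hcont2 0 (fun t ht => by
          have : p.1 - t * p.2 ≤ p.1 + t * p.2 := by
            have := mul_nonneg ht.1 hy.le; linarith
          linarith [hgmono this])
      · refine BAaux_integral_le_const _ hcont2 r' (fun t ht => ?_)
        obtain ⟨hA, hB⟩ := hrange t ht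
        rw [hr']
        linarith [hgmono hA, hgmono hB]
    · rw [BAbar, if_neg hy]
      refine ⟨Set.mem_Icc.mpr ⟨?_, ?_⟩, Set.mem_Icc.mpr ⟨le_rfl, hr'nonneg⟩⟩
      · linarith [hgmono (show x - 2*r ≤ p.1 by linarith [hp1.1])]
      · linarith [hgmono (show p.1 ≤ x + 2*r by linarith [hp1.2])]
  -- frontier estimate: image of lateral/top boundary of the big box avoids the target box
  have hfront : ∀ p : ℝ × ℝ, p ∈ Dbox x R → (p.1 = x - R ∨ p.1 = x + R ∨ p.2 = R) →
      BAbar g p ∉ Dbox (g x) R' := by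
    intro p hp hcase
    obtain ⟨hp1, hp2⟩ := hp
    simp only [Set.mem_Icc] at hp1 hp2
    -- useful grid increments: g(x + R/2) - g x ≥ 4R', g x - g(x - R/2) ≥ 4R'
    rcases hcase with hc | hc | hc
    · -- left edge: first coordinate ≤ g x - 2 R'
      intro hmem
      obtain ⟨hm1, _⟩ := hmem
      simp only [Set.mem_Icc] at hm1
      have hfirst : (BAbar g p).1 ≤ g x - 2 * R' := by
        by_cases hy : 0 < p.2
        · rw [BAbar, if_pos hy]
          have hcont1 : Continuous fun t : ℝ => g (p.1 + t * p.2) + g (p.1 - t * p.2) :=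
            ((hcont.comp (continuous_const.add (continuous_id.mul continuous_const))).add (hcont.comp (continuous_const.sub (continuous_id.mul continuous_const))))
          have hb := BAaux_integral_le_split _ hcont1 (1/2) (2 * g (x - R/2)) (2 * g x)
            (by norm_num) (by norm_num)
            (fun t ht => by
              have h1 : p.1 + t * p.2 ≤ x - R/2 := by
                rw [hc]
                have : t * p.2 ≤ R/2 := by nlinarith [ht.2, hp2.2, ht.1, hy.le]
                linarith
              have h2 : p.1 - t * p.2 ≤ p.1 + t * p.2 := by
                have := mul_nonneg ht.1 hy.le; linarith
              linarith [hgmono h1, hgmono (h2.trans h1)])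
            (fun t ht => by
              have h1 : p.1 + t * p.2 ≤ x := by
                rw [hc]
                have : t * p.2 ≤ R := by nlinarith [ht.2, hp2.2, hy.le, ht.1]
                linarith
              have h2 : p.1 - t * p.2 ≤ p.1 + t * p.2 := by
                have h0 : 0 ≤ t * p.2 := mul_nonneg (by linarith [ht.1]) hy.le
                linarith
              linarith [hgmono h1, hgmono (h2.trans h1)])
          have hgrid : 4 * R' ≤ g x - g (x - R/2) := by linarith
          show (1/2 * ∫ t in (0:ℝ)..1, (g (p.1 + t * p.2) + g (p.1 - t * p.2))) ≤ g x - 2 * R'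
          linarith
        · rw [BAbar, if_neg hy]
          show g p.1 ≤ g x - 2 * R'
          rw [hc]
          have hgrid : 8 * R' ≤ g x - g (x - R) := by linarith
          linarith
      linarith [hm1.1, hfirst, hR'pos]
    · -- right edge: first coordinate ≥ g x + 2 R'
      intro hmem
      obtain ⟨hm1, _⟩ := hmem
      simp only [Set.mem_Icc] at hm1
      have hfirst : g x + 2 * R' ≤ (BAbar g p).1 := by
        by_cases hy : 0 < p.2
        · rw [BAbar, if_pos hy]
          have hcont1 : Continuous fun t : ℝ => g (p.1 + t * p.2) + g (p.1 - t * p.2) :=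
            ((hcont.comp (continuous_const.add (continuous_id.mul continuous_const))).add (hcont.comp (continuous_const.sub (continuous_id.mul continuous_const))))
          have hb := BAaux_integral_ge_split _ hcont1 (1/2) (2 * g (x + R/2)) (2 * g x)
            (by norm_num) (by norm_num)
            (fun t ht => by
              have h1 : x + R/2 ≤ p.1 - t * p.2 := by
                rw [hc]
                have : t * p.2 ≤ R/2 := by nlinarith [ht.2, hp2.2, ht.1, hy.le]
                linarith
              have h2 : p.1 - t * p.2 ≤ p.1 + t * p.2 := by
                have := mul_nonneg ht.1 hy.le; linarith
              linarith [hgmono h1, hgmono (h1.trans h2)])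
            (fun t ht => by
              have h1 : x ≤ p.1 - t * p.2 := by
                rw [hc]
                have : t * p.2 ≤ R := by nlinarith [ht.2, hp2.2, hy.le, ht.1]
                linarith
              have h2 : p.1 - t * p.2 ≤ p.1 + t * p.2 := by
                have h0 : 0 ≤ t * p.2 := mul_nonneg (by linarith [ht.1]) hy.le
                linarith
              linarith [hgmono h1, hgmono (h1.trans h2)])
          have hgrid : 4 * R' ≤ g (x + R/2) - g x := by linarith
          show g x + 2 * R' ≤ 1/2 * ∫ t in (0:ℝ)..1, (g (p.1 + t * p.2) + g (p.1 - t * p.2))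
          linarith
        · rw [BAbar, if_neg hy]
          show g x + 2 * R' ≤ g p.1
          rw [hc]
          have hgrid : 8 * R' ≤ g (x + R) - g x := by linarith
          linarith
      linarith [hm1.2, hfirst, hR'pos]
    · -- top edge: second coordinate ≥ (3/2) R'
      intro hmem
      obtain ⟨_, hm2⟩ := hmem
      simp only [Set.mem_Icc] at hm2
      have hy : 0 < p.2 := hc ▸ hR
      -- find a grid cell inside [p.1 - R/4, p.1 + R/4]
      have hcell : ∃ k : ℕ, k ∈ Finset.Icc 1 8 ∧
          p.1 - R/4 ≤ x - R + ((k : ℝ) - 1) * R / 4 ∧ x - R + (k : ℝ) * R / 4 ≤ p.1 + R/4 := by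
        set u : ℝ := (p.1 - (x - R)) * 4 / R with hu
        have hu0 : 0 ≤ u := by
          rw [hu]
          have : 0 ≤ p.1 - (x - R) := by linarith [hp1.1]
          positivity
        have hu8 : u ≤ 8 := by
          rw [hu, div_le_iff₀ hR]  -- u ≤ 8 ↔ (p.1-(x-R))*4 ≤ 8 R
          nlinarith [hp1.2]
        refine ⟨max 1 ⌈u⌉₊, ?_, ?_, ?_⟩
        · simp only [Finset.mem_Icc]
          constructor
          · exact le_max_left _ _
          · have : ⌈u⌉₊ ≤ 8 := Nat.ceil_le.mpr (by exact_mod_cast hu8)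
            omega
        · -- a_{k-1} ≥ p.1 - R/4  ⇔  u ≤ k
          have hk_ge : u ≤ ((max 1 ⌈u⌉₊ : ℕ) : ℝ) := by
            have h1 : u ≤ (⌈u⌉₊ : ℝ) := Nat.le_ceil u
            have h2 : (⌈u⌉₊ : ℝ) ≤ ((max 1 ⌈u⌉₊ : ℕ) : ℝ) := Nat.cast_le.mpr (le_max_right _ _)
            linarith
          have hp1u : p.1 = x - R + u * R / 4 := by
            rw [hu]; field_simp; ring
          rw [hp1u]
          nlinarith [hk_ge, hR.le]
        · -- a_k ≤ p.1 + R/4  ⇔  k ≤ u + 1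
          have hk_le : ((max 1 ⌈u⌉₊ : ℕ) : ℝ) ≤ u + 1 := by
            rcases max_cases 1 ⌈u⌉₊ with ⟨hmax, hle⟩ | ⟨hmax, hlt⟩
            · rw [hmax]
              have : (⌈u⌉₊ : ℝ) ≥ 1 → True := fun _ => trivial
              have h0 : ⌈u⌉₊ = 0 ∨ 1 ≤ ⌈u⌉₊ := by omega
              rcases h0 with h0 | h0
              · have : u ≤ 0 := by
                  by_contra hcon
                  have := Nat.one_le_ceil_iff.mpr (lt_of_not_ge hcon)
                  omega
                push_cast; linarith
              · have h1 : (1:ℕ) = ⌈u⌉₊ ∨ (1:ℕ) < ⌈u⌉₊ := eq_or_lt_of_le h0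
                have := Nat.ceil_lt_add_one hu0
                rcases h1 with h1 | h1
                · rw [← h1] at this; push_cast at this ⊢; linarith
                · omega
            · rw [hmax]
              have := Nat.ceil_lt_add_one hu0
              linarith
          have hp1u : p.1 = x - R + u * R / 4 := by
            rw [hu]; field_simp; ring
          rw [hp1u]
          nlinarith [hk_le, hR.le]
      obtain ⟨k, hk, hcell1, hcell2⟩ := hcell
      have hC : 2 * R' ≤ g (p.1 + R/4) - g (p.1 - R/4) := by
        have := key k hk
        linarith [hgmono hcell1, hgmono hcell2]
      have hsecond : (3/2) * R' ≤ (BAbar g p).2 := by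
        rw [BAbar, if_pos hy]
        have hcont2 : Continuous fun t : ℝ => g (p.1 + t * p.2) - g (p.1 - t * p.2) :=
          ((hcont.comp (continuous_const.add (continuous_id.mul continuous_const))).sub (hcont.comp (continuous_const.sub (continuous_id.mul continuous_const))))
        have hb := BAaux_integral_ge_split _ hcont2 (1/4) 0 (g (p.1 + R/4) - g (p.1 - R/4))
          (by norm_num) (by norm_num)
          (fun t ht => by
            have : p.1 - t * p.2 ≤ p.1 + t * p.2 := by
              have := mul_nonneg ht.1 hy.le; linarith
            linarith [hgmono this])
          (fun t ht => by
            have h1 : p.1 + R/4 ≤ p.1 + t * p.2 := by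
              rw [hc]; nlinarith [ht.1, hR]
            have h2 : p.1 - t * p.2 ≤ p.1 - R/4 := by
              rw [hc]; nlinarith [ht.1, hR]
            linarith [hgmono h1, hgmono h2])
        show (3/2) * R' ≤ ∫ t in (0:ℝ)..1, (g (p.1 + t * p.2) - g (p.1 - t * p.2))
        calc (3/2) * R' ≤ (1/4) * 0 + (1 - 1/4) * (g (p.1 + R/4) - g (p.1 - R/4)) := by linarith
          _ ≤ _ := hb
      linarith [hm2.2, hsecond, hR'pos]
  -- (a): the big target box is inside the image of the big box, via topology
  have hbig : Dbox (g x) R' ⊆ BAbar g '' (Dbox x R) := by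
    set K : Set {p : ℝ × ℝ // 0 ≤ p.2} := Subtype.val ⁻¹' (Dbox x R) with hKdef
    have hDclosed : IsClosed (Dbox x R) := (isClosed_Icc).prod isClosed_Icc
    have hKclosed : IsClosed K := hDclosed.preimage continuous_subtype_val
    have himg_eq : h '' K = h.symm ⁻¹' K := h.toEquiv.image_eq_preimage_symm K
    have hVsub : (Subtype.val ⁻¹' (Set.Ioo (x - R) (x + R) ×ˢ Set.Iio R) :
        Set {p : ℝ × ℝ // 0 ≤ p.2}) ⊆ K := by
      rintro ⟨p, hp0⟩ hp
      obtain ⟨h1, h2⟩ := hp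
      exact ⟨⟨h1.1.le, h1.2.le⟩, ⟨hp0, h2.le⟩⟩
    have hVint : (Subtype.val ⁻¹' (Set.Ioo (x - R) (x + R) ×ˢ Set.Iio R) :
        Set {p : ℝ × ℝ // 0 ≤ p.2}) ⊆ interior K :=
      interior_maximal hVsub ((isOpen_Ioo.prod isOpen_Iio).preimage continuous_subtype_val)
    have hfrontK : ∀ q : {p : ℝ × ℝ // 0 ≤ p.2}, q ∈ frontier K →
        (q : ℝ × ℝ) ∈ Dbox x R ∧
        ((q : ℝ × ℝ).1 = x - R ∨ (q : ℝ × ℝ).1 = x + R ∨ (q : ℝ × ℝ).2 = R) := by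
      intro q hq
      have hqK : q ∈ K := hKclosed.frontier_subset hq
      have hqni : q ∉ interior K := hq.2
      refine ⟨hqK, ?_⟩
      obtain ⟨hq1, hq2⟩ := hqK
      simp only [Set.mem_Icc] at hq1 hq2
      by_contra hcon
      push_neg at hcon
      obtain ⟨hc1, hc2, hc3⟩ := hcon
      exact hqni (hVint ⟨⟨lt_of_le_of_ne hq1.1 (Ne.symm hc1), lt_of_le_of_ne hq1.2 hc2⟩,
        lt_of_le_of_ne hq2.2 hc3⟩)
    set S : Set {p : ℝ × ℝ // 0 ≤ p.2} := Subtype.val ⁻¹' (Dbox (g x) R') with hSdef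
    have hSsub : Dbox (g x) R' ⊆ Set.range (Subtype.val : {p : ℝ × ℝ // 0 ≤ p.2} → ℝ × ℝ) := by
      intro p hp
      rw [Subtype.range_coe_subtype]
      exact hp.2.1
    have hSval : Subtype.val '' S = Dbox (g x) R' :=
      Set.image_preimage_eq_of_subset hSsub
    have hSpre : IsPreconnected S := by
      have := ((convex_Icc (g x - R') (g x + R')).prod (convex_Icc 0 R')).isPreconnected
      have h2 : IsPreconnected (Subtype.val '' S) := by rw [hSval]; exact this
      exact (Topology.IsInducing.subtypeVal.isPreconnected_image).mp h2
    have hp0K : (⟨(x, 0), le_rfl⟩ : {p : ℝ × ℝ // 0 ≤ p.2}) ∈ K := by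
      refine ⟨Set.mem_Icc.mpr ⟨by linarith, by linarith⟩, Set.mem_Icc.mpr ⟨le_rfl, hR.le⟩⟩
    have hp0val : ((h ⟨(x, 0), le_rfl⟩ : {p : ℝ × ℝ // 0 ≤ p.2}) : ℝ × ℝ) = (g x, 0) := by
      rw [hh]
      show BAbar g (x, 0) = (g x, 0)
      rw [BAbar, if_neg (by norm_num)]
    have hp0S : h ⟨(x, 0), le_rfl⟩ ∈ S := by
      show ((h ⟨(x, 0), le_rfl⟩ : {p : ℝ × ℝ // 0 ≤ p.2}) : ℝ × ℝ) ∈ Dbox (g x) R'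
      rw [hp0val]
      exact ⟨Set.mem_Icc.mpr ⟨by linarith, by linarith⟩, Set.mem_Icc.mpr ⟨le_rfl, hR'pos.le⟩⟩
    have hScover : S ⊆ h '' K := by
      by_contra hno
      obtain ⟨q0, hq0S, hq0n⟩ := Set.not_subset.mp hno
      obtain ⟨z, hzS, hzf⟩ := BAaux_preconn_frontier hSpre
        ⟨h ⟨(x, 0), le_rfl⟩, hp0S, Set.mem_image_of_mem h hp0K⟩ ⟨q0, hq0S, hq0n⟩
      have hzf' : z ∈ h '' frontier K := by
        rw [himg_eq, ← h.symm.preimage_frontier K] at hzf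
        exact ⟨h.symm z, hzf, h.apply_symm_apply z⟩
      obtain ⟨w, hwf, hwz⟩ := hzf'
      obtain ⟨hw1, hw2⟩ := hfrontK w hwf
      have : BAbar g (w : ℝ × ℝ) ∈ Dbox (g x) R' := by
        have : ((h w : {p : ℝ × ℝ // 0 ≤ p.2}) : ℝ × ℝ) ∈ Dbox (g x) R' := by
          rw [hwz]; exact hzS
        rwa [hh w] at this
      exact hfront (w : ℝ × ℝ) hw1 hw2 this
    intro q hq
    have hq' : (⟨q, hq.2.1⟩ : {p : ℝ × ℝ // 0 ≤ p.2}) ∈ S := hq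
    obtain ⟨w, hwK, hwq⟩ := hScover hq'
    refine ⟨(w : ℝ × ℝ), hwK, ?_⟩
    have := hh w
    rw [hwq] at this
    exact this.symm
  intro q hq
  obtain ⟨hq1, hq2⟩ := hq
  obtain ⟨p, hp, hpq⟩ := hbig hq1
  exact ⟨p, ⟨hp, fun hpr => hq2 (hpq ▸ hsmall p hpr)⟩, hpq⟩
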